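/- Willis-type greedy matching gives the key in type A: if rC_1 ℓC_2 is a two-column semistandard filling over a totally ordered alphabet with the second column weakly shorter, then processing the entries of the second column from largest to smallest and matching each with the largest unmatched entry of the first column that is ≤ it, every entry of the second column gets matched. -/

import Mathlib

/-- Greedy matching over a totally ordered alphabet: process `betas` (given in
decreasing order), matching each with the greatest not-yet-matched element of `avail`
that is `≤` it; `none` if some beta finds no match. -/
def matchAuxG {α : Type*} [LinearOrder α] (avail : List α) : List α → Option (List (α × α))
  | [] => some []
  | b :: bs =>
    match (avail.filter (fun a => decide (a ≤ b))).max? with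
    | none => none
    | some a => (matchAuxG (avail.erase a) bs).map ((b, a) :: ·)

private lemma filter_erase_of_neg {α : Type*} [DecidableEq α] {p : α → Bool} {a : α}
    (h : p a = false) : ∀ (l : List α), (l.erase a).filter p = l.filter p := by
  intro l
  induction l with
  | nil => simp
  | cons x xs ih =>
    by_cases hx : x = a
    · subst hx; simp [List.erase_cons_head, h]
    · rw [List.erase_cons_tail (by simpa using hx)]
      by_cases hp : p x
      · simp [List.filter_cons, hp, ih]
      · simp only [Bool.not_eq_true] at hp
        simp [List.filter_cons, hp, ih]

private lemma length_filter_erase_of_pos {α : Type*} [DecidableEq α] {p : α → Bool} {a : α}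
    (hp : p a = true) : ∀ (l : List α), a ∈ l →
    ((l.erase a).filter p).length + 1 = (l.filter p).length := by
  intro l
  induction l with
  | nil => simp
  | cons x xs ih =>
    intro hmem
    by_cases hx : x = a
    · subst hx; simp [List.erase_cons_head, List.filter_cons, hp]
    · rw [List.erase_cons_tail (by simpa using hx)]
      have hmem' : a ∈ xs := by
        rcases List.mem_cons.mp hmem with h | h
        · exact absurd h.symm hx
        · exact h
      by_cases hq : p x
      · simp [List.filter_cons, hq, ih hmem']
      · simp only [Bool.not_eq_true] at hq
        simp [List.filter_cons, hq, ih hmem']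

private lemma matchAuxG_isSome {α : Type*} [LinearOrder α] :
    ∀ (betas avail : List α), betas.Pairwise (fun x y => y ≤ x) →
    (∀ j (hj : j < betas.length),
      betas.length - j ≤ ((avail.filter (fun a => decide (a ≤ betas.get ⟨j, hj⟩))).length)) →
    (matchAuxG avail betas).isSome = true := by
  intro betas
  induction betas with
  | nil => intro avail _ _; simp [matchAuxG]
  | cons b bs ih =>
    intro avail hp hc
    obtain ⟨hb, hbs⟩ := List.pairwise_cons.mp hp
    have h0 := hc 0 (by simp)
    simp only [List.get_eq_getElem, List.getElem_cons_zero, Nat.sub_zero, List.length_cons] at h0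
    set F := avail.filter (fun a => decide (a ≤ b)) with hF
    have hFne : F ≠ [] := by
      intro h; rw [h] at h0; simp at h0
    obtain ⟨a, hmax⟩ : ∃ a, F.max? = some a := by
      cases hm : F.max? with
      | none => exact absurd (List.max?_eq_none_iff.mp hm) hFne
      | some a => exact ⟨a, rfl⟩
    have haF : a ∈ F := List.max?_mem hmax
    have hle : ∀ x ∈ F, x ≤ a :=
      (List.max?_le_iff hmax).mp (le_refl a)
    have havail : a ∈ avail := (List.mem_filter.mp haF).1
    have hab : a ≤ b := by simpa using (List.mem_filter.mp haF).2
    have key : (matchAuxG (avail.erase a) bs).isSome = true := by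
      apply ih _ hbs
      intro j hj
      set c := bs.get ⟨j, hj⟩ with hcdef
      have hcb : c ≤ b := hb c (by rw [hcdef]; exact List.get_mem bs ⟨j, hj⟩)
      by_cases hac : a ≤ c
      · -- filters for ≤ c and ≤ b on avail coincide
        have hfeq : avail.filter (fun x => decide (x ≤ c)) = F := by
          rw [hF]
          apply List.filter_congr
          intro x hx
          simp only [decide_eq_decide]
          constructor
          · exact fun h => le_trans h hcb
          · intro h
            exact le_trans (hle x (List.mem_filter.mpr ⟨hx, by simpa using h⟩)) hac
        have hcount := length_filter_erase_of_pos (p := fun x => decide (x ≤ c))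
          (by simpa using hac) avail havail
        have : bs.length + 1 ≤ (avail.filter (fun x => decide (x ≤ c))).length := by
          rw [hfeq]; exact h0
        omega
      · have hpa : (fun x => decide (x ≤ c)) a = false := by simpa using hac
        rw [filter_erase_of_neg (p := fun x => decide (x ≤ c)) hpa]
        have := hc (j + 1) (by simpa using Nat.succ_lt_succ hj)
        simpa [hcdef] using this
    simp only [matchAuxG, ← hF, hmax]
    simpa using key

theorem greedy_matching_total {α : Type*} [LinearOrder α] (c1 c2 : List α)
    (h1 : c1.Chain' (· < ·)) (h2 : c2.Chain' (· < ·)) (hlen : c2.length ≤ c1.length)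
    (hrow : ∀ i : ℕ, (hi : i < c2.length) →
      c1.get ⟨i, lt_of_lt_of_le hi hlen⟩ ≤ c2.get ⟨i, hi⟩) :
    (matchAuxG c1 c2.reverse).isSome = true := by
  apply matchAuxG_isSome
  · rw [List.pairwise_reverse]
    exact (List.isChain_iff_pairwise.mp h2).imp le_of_lt
  · intro j hj
    have hm : j < c2.length := by simpa using hj
    simp only [List.get_eq_getElem, List.getElem_reverse, List.length_reverse]
    obtain ⟨i, hi, hieq, hmj⟩ :
        ∃ i, i < c2.length ∧ c2.length - 1 - j = i ∧ c2.length - j = i + 1 :=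
      ⟨c2.length - 1 - j, by omega, rfl, by omega⟩
    simp only [hieq, hmj]
    have hi1 : i + 1 ≤ c1.length := le_trans hi hlen
    -- take (i+1) of c1 all satisfy ≤ c2[i]
    have hall : ∀ x ∈ c1.take (i + 1), decide (x ≤ c2[i]) = true := by
      intro x hx
      obtain ⟨k, hk, hkx⟩ := List.mem_iff_getElem.mp hx
      have hk' : k < i + 1 := by simpa using lt_of_lt_of_le hk (List.length_take_le _ _)
      have hkc1 : k < c1.length := lt_of_lt_of_le hk' hi1
      have hx1 : x = c1[k] := by rw [← hkx]; exact List.getElem_take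
      have hki : c1[k] ≤ c1[i] := by
        rcases Nat.lt_or_ge k i with h | h
        · exact le_of_lt ((List.pairwise_iff_getElem.mp (List.isChain_iff_pairwise.mp h1))
            k i hkc1 (lt_of_lt_of_le hi hlen) h)
        · have : k = i := by omega
          subst this; exact le_refl _
      have := hrow i hi
      simp only [List.get_eq_getElem] at this
      simpa [hx1] using le_trans hki this
    have hsub : (c1.take (i + 1)).Sublist c1 := List.take_sublist _ _
    have hsub2 : ((c1.take (i + 1)).filter (fun a => decide (a ≤ c2[i]))).Sublist
        (c1.filter (fun a => decide (a ≤ c2[i]))) := hsub.filter _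
    have heq : (c1.take (i + 1)).filter (fun a => decide (a ≤ c2[i])) = c1.take (i + 1) :=
      List.filter_eq_self.mpr hall
    have := hsub2.length_le
    rw [heq] at this
    simpa [Nat.min_eq_left hi1] using this
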